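/- Fix M, L with 2L ≤ M and let H = M − 2L. Let δ₀ be the M×M canonical boundary operator over ZMod 2 with (δ₀) i j = 1 iff H ≤ i < H + L and j = i + L. Then for any matrix δ : Matrix (Fin M) (Fin M) (ZMod 2) with δ·δ = 0 and rank(δ) = L, the number of invertible matrices U with δ = U·δ₀·U⁻¹ equals the number of invertible matrices U with δ₀ = U·δ₀·U⁻¹; in particular this number is the same for all such δ. -/

import Mathlib

set_option maxHeartbeats 4000000
set_option synthInstance.maxHeartbeats 400000

open Matrix Module

theorem aux_basis (M L H : ℕ) (hM : 2 * L ≤ M) (hH : H = M - 2 * L)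
    (f : (Fin M → ZMod 2) →ₗ[ZMod 2] (Fin M → ZMod 2))
    (hRK : LinearMap.range f ≤ LinearMap.ker f)
    (hrk : finrank (ZMod 2) (LinearMap.range f) = L) :
    ∃ B : Basis (Fin M) (ZMod 2) (Fin M → ZMod 2), ∀ i : Fin M,
      f (B i) = if h : H + L ≤ (i : ℕ) then
        B ⟨(i : ℕ) - L, lt_of_le_of_lt (Nat.sub_le _ _) i.isLt⟩
      else 0 := by
  have hMeq : M = H + L + L := by omega
  set K := LinearMap.ker f with hKdef
  set R := LinearMap.range f with hRdef
  have htot : finrank (ZMod 2) (Fin M → ZMod 2) = M := Module.finrank_fin_fun _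
  have hrankR : finrank (ZMod 2) R = L := hrk
  have hrankK : finrank (ZMod 2) K = H + L := by
    have h2 := LinearMap.finrank_range_add_finrank_ker f
    rw [htot] at h2
    rw [← hRdef, ← hKdef] at h2
    omega
  obtain ⟨C₂, hC₂⟩ := Submodule.exists_isCompl K
  have hrankC₂ : finrank (ZMod 2) C₂ = L := by
    have h2 := Submodule.finrank_add_eq_of_isCompl hC₂
    rw [htot, hrankK] at h2
    omega
  set R' : Submodule (ZMod 2) K := R.comap K.subtype with hR'def
  have hrankR' : finrank (ZMod 2) R' = L := by
    rw [(Submodule.comapSubtypeEquivOfLe hRK).finrank_eq, hrankR]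
  obtain ⟨C₁, hC₁⟩ := Submodule.exists_isCompl R'
  have hrankC₁ : finrank (ZMod 2) C₁ = H := by
    have h2 := Submodule.finrank_add_eq_of_isCompl hC₁
    rw [hrankR', hrankK] at h2
    omega
  -- bases
  let bR : Basis (Fin L) (ZMod 2) R := Module.finBasisOfFinrankEq _ _ hrankR
  let bC₁ : Basis (Fin H) (ZMod 2) C₁ := Module.finBasisOfFinrankEq _ _ hrankC₁
  let bR' : Basis (Fin L) (ZMod 2) R' :=
    bR.map (Submodule.comapSubtypeEquivOfLe hRK).symm
  have hbR' : ∀ b : Fin L, ((bR' b : K) : Fin M → ZMod 2) = (bR b : Fin M → ZMod 2) := by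
    intro b
    conv_rhs => rw [← (Submodule.comapSubtypeEquivOfLe hRK).apply_symm_apply (bR b)]
    rw [Submodule.comapSubtypeEquivOfLe_apply_coe]
    rfl
  let g : C₂ ≃ₗ[ZMod 2] R :=
    (Submodule.quotientEquivOfIsCompl K C₂ hC₂).symm.trans f.quotKerEquivRange
  have hg : ∀ c : C₂, ((g c : Fin M → ZMod 2)) = f c := fun c => by
    simp only [g, LinearEquiv.trans_apply, Submodule.quotientEquivOfIsCompl_symm_apply]
    rfl
  let bC₂ : Basis (Fin L) (ZMod 2) C₂ := bR.map g.symm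
  have hfc : ∀ k : Fin L, f (bC₂ k) = (bR k : Fin M → ZMod 2) := fun k => by
    rw [← hg]
    simp [bC₂]
  -- the assembled basis
  let E : ((C₁ × R') × C₂) ≃ₗ[ZMod 2] (Fin M → ZMod 2) :=
    ((Submodule.prodEquivOfIsCompl C₁ R' hC₁.symm).prodCongr
      (LinearEquiv.refl (ZMod 2) C₂)).trans (Submodule.prodEquivOfIsCompl K C₂ hC₂)
  let B₀ : Basis ((Fin H ⊕ Fin L) ⊕ Fin L) (ZMod 2) (Fin M → ZMod 2) :=
    ((bC₁.prod bR').prod bC₂).map E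
  let e : ((Fin H ⊕ Fin L) ⊕ Fin L) ≃ Fin M :=
    ((finSumFinEquiv.sumCongr (Equiv.refl (Fin L)))).trans
      (finSumFinEquiv.trans (finCongr hMeq.symm))
  let B : Basis (Fin M) (ZMod 2) (Fin M → ZMod 2) := B₀.reindex e
  have hBe : ∀ x, B (e x) = B₀ x := fun x => by
    simp [B, Module.Basis.reindex_apply]
  have he1 : ∀ a : Fin H, ((e (Sum.inl (Sum.inl a))) : ℕ) = (a : ℕ) := fun a => by
    simp [e]
  have he2 : ∀ b : Fin L, ((e (Sum.inl (Sum.inr b))) : ℕ) = H + (b : ℕ) := fun b => by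
    simp [e]
  have he3 : ∀ c : Fin L, ((e (Sum.inr c)) : ℕ) = H + L + (c : ℕ) := fun c => by
    simp [e, add_assoc]
  have hB0 : ∀ x, B (e x) = E (((bC₁.prod bR').prod bC₂) x) := fun x => by
    rw [hBe]
    exact Basis.map_apply _ _ _
  have hEval : ∀ (x : C₁) (y : R') (z : C₂), E ((x, y), z) =
      ((x : K) : Fin M → ZMod 2) + ((y : K) : Fin M → ZMod 2) + (z : Fin M → ZMod 2) := by
    intro x y z
    simp only [E, LinearEquiv.trans_apply, LinearEquiv.prodCongr_apply, LinearEquiv.refl_apply,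
      Submodule.coe_prodEquivOfIsCompl', Submodule.coe_add]
  have hx1 : ∀ a : Fin H, ((bC₁.prod bR').prod bC₂) (Sum.inl (Sum.inl a)) = ((bC₁ a, 0), 0) := by
    intro a
    refine Prod.ext ?_ (Basis.prod_apply_inl_snd _ _ _)
    rw [Basis.prod_apply_inl_fst]
    exact Prod.ext (Basis.prod_apply_inl_fst _ _ _) (Basis.prod_apply_inl_snd _ _ _)
  have hx2 : ∀ b : Fin L, ((bC₁.prod bR').prod bC₂) (Sum.inl (Sum.inr b)) = ((0, bR' b), 0) := by
    intro b
    refine Prod.ext ?_ (Basis.prod_apply_inl_snd _ _ _)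
    rw [Basis.prod_apply_inl_fst]
    exact Prod.ext (Basis.prod_apply_inr_fst _ _ _) (Basis.prod_apply_inr_snd _ _ _)
  have hx3 : ∀ c : Fin L, ((bC₁.prod bR').prod bC₂) (Sum.inr c) = ((0, 0), bC₂ c) := by
    intro c
    refine Prod.ext ?_ (Basis.prod_apply_inr_snd _ _ _)
    rw [Basis.prod_apply_inr_fst]
    rfl
  have hB1 : ∀ a : Fin H, B (e (Sum.inl (Sum.inl a))) = ((bC₁ a : K) : Fin M → ZMod 2) :=
    fun a => by
      rw [hB0, hx1, hEval]
      simp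
  have hB2 : ∀ b : Fin L, B (e (Sum.inl (Sum.inr b))) = (bR b : Fin M → ZMod 2) :=
    fun b => by
      rw [hB0, hx2, hEval, hbR']
      simp
  have hB3 : ∀ c : Fin L, B (e (Sum.inr c)) = (bC₂ c : Fin M → ZMod 2) :=
    fun c => by
      rw [hB0, hx3, hEval]
      simp
  have hker1 : ∀ a : Fin H, f ((bC₁ a : K) : Fin M → ZMod 2) = 0 := fun a =>
    LinearMap.mem_ker.mp (bC₁ a : K).2
  have hker2 : ∀ b : Fin L, f ((bR b) : Fin M → ZMod 2) = 0 := fun b =>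
    LinearMap.mem_ker.mp (hRK (bR b).2)
  clear_value bR bC₁ bR' g bC₂ E B₀ e B
  have key : ∀ i : Fin M, f (B i) =
      if h : H + L ≤ (i : ℕ) then B ⟨(i : ℕ) - L, lt_of_le_of_lt (Nat.sub_le _ _) i.isLt⟩
      else 0 := by
    intro i
    by_cases h1 : (i : ℕ) < H
    · have he : e (Sum.inl (Sum.inl ⟨(i : ℕ), h1⟩)) = i := by
        apply Fin.ext
        rw [he1]
      have hBi := hB1 ⟨(i : ℕ), h1⟩
      rw [he] at hBi
      rw [hBi, dif_neg (by omega)]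
      exact hker1 _
    · by_cases h2 : (i : ℕ) < H + L
      · obtain ⟨b0, hb0⟩ : ∃ b : Fin L, (b : ℕ) = (i : ℕ) - H := ⟨⟨_, by omega⟩, rfl⟩
        have he : e (Sum.inl (Sum.inr b0)) = i := by
          apply Fin.ext
          rw [he2, hb0]
          omega
        have hBi := hB2 b0
        rw [he] at hBi
        rw [hBi, dif_neg (by omega)]
        exact hker2 _
      · obtain ⟨c0, hc0⟩ : ∃ c : Fin L, (c : ℕ) = (i : ℕ) - (H + L) := ⟨⟨_, by omega⟩, rfl⟩
        have he : e (Sum.inr c0) = i := by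
          apply Fin.ext
          rw [he3, hc0]
          omega
        have hBi := hB3 c0
        rw [he] at hBi
        rw [hBi, hfc, dif_pos (by omega)]
        have hmk : (⟨(i : ℕ) - L, lt_of_le_of_lt (Nat.sub_le _ _) i.isLt⟩ : Fin M)
            = e (Sum.inl (Sum.inr c0)) := by
          apply Fin.ext
          rw [he2, hc0]
          simp only [Fin.val_mk]
          omega
        rw [hmk, hB2]
  refine ⟨B, key⟩

theorem aux_matrix (M L H : ℕ) (hM : 2 * L ≤ M) (hH : H = M - 2 * L)
    (δ₀ : Matrix (Fin M) (Fin M) (ZMod 2))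
    (hδ₀ : ∀ i j : Fin M, δ₀ i j =
      if H ≤ (i : ℕ) ∧ (i : ℕ) < H + L ∧ (j : ℕ) = (i : ℕ) + L then 1 else 0)
    (δ : Matrix (Fin M) (Fin M) (ZMod 2))
    (B : Basis (Fin M) (ZMod 2) (Fin M → ZMod 2))
    (key : ∀ i : Fin M,
      δ.mulVecLin (B i) = if h : H + L ≤ (i : ℕ) then
        B ⟨(i : ℕ) - L, lt_of_le_of_lt (Nat.sub_le _ _) i.isLt⟩
      else 0) :
    ∃ P : Matrix (Fin M) (Fin M) (ZMod 2), IsUnit P ∧ δ = P * δ₀ * P⁻¹ := by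
  let P : Matrix (Fin M) (Fin M) (ZMod 2) := (Pi.basisFun (ZMod 2) (Fin M)).toMatrix B
  have hPentry : ∀ i j, P i j = B j i := fun i j => by
    simp [P, Basis.toMatrix_apply]
  have hPunit : IsUnit P := by
    have := (Pi.basisFun (ZMod 2) (Fin M)).invertibleToMatrix B
    exact isUnit_of_invertible P
  clear_value P
  have hcomm : δ * P = P * δ₀ := by
    ext i j
    have hL : (δ * P) i j = δ.mulVecLin (B j) i := by
      simp only [Matrix.mul_apply, Matrix.mulVecLin_apply, Matrix.mulVec, dotProduct]
      refine Finset.sum_congr rfl fun k _ => ?_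
      rw [hPentry]
    have hRhs : (P * δ₀) i j = ∑ k, B k i * δ₀ k j := by
      simp only [Matrix.mul_apply]
      refine Finset.sum_congr rfl fun k _ => ?_
      rw [hPentry]
    rw [hL, hRhs, key]
    by_cases hj : H + L ≤ (j : ℕ)
    · rw [dif_pos hj]
      rw [Finset.sum_eq_single (⟨(j : ℕ) - L, by omega⟩ : Fin M)]
      · rw [hδ₀, if_pos (by refine ⟨?_, ?_, ?_⟩ <;> simp only [Fin.val_mk] <;> omega),
          mul_one]
      · intro k _ hk
        rw [hδ₀, if_neg, mul_zero]
        rintro ⟨h1, h2, h3⟩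
        exact hk (Fin.ext (by simp only [Fin.val_mk]; omega))
      · intro h
        exact absurd (Finset.mem_univ _) h
    · rw [dif_neg hj]
      simp only [Pi.zero_apply]
      symm
      apply Finset.sum_eq_zero
      intro k _
      rw [hδ₀, if_neg, mul_zero]
      rintro ⟨h1, h2, h3⟩
      omega
  refine ⟨P, hPunit, ?_⟩
  have hdet : IsUnit P.det := (Matrix.isUnit_iff_isUnit_det P).mp hPunit
  calc δ = δ * (P * P⁻¹) := by rw [Matrix.mul_nonsing_inv P hdet, mul_one]
  _ = (δ * P) * P⁻¹ := by rw [mul_assoc]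
  _ = P * δ₀ * P⁻¹ := by rw [hcomm]


/-- Any boundary operator of rank `L` is conjugate to the canonical one. -/
theorem exists_conj_canonical (M L H : ℕ) (hM : 2 * L ≤ M) (hH : H = M - 2 * L)
    (δ₀ : Matrix (Fin M) (Fin M) (ZMod 2))
    (hδ₀ : ∀ i j : Fin M, δ₀ i j =
      if H ≤ (i : ℕ) ∧ (i : ℕ) < H + L ∧ (j : ℕ) = (i : ℕ) + L then 1 else 0)
    (δ : Matrix (Fin M) (Fin M) (ZMod 2)) (hδ : δ * δ = 0) (hrank : δ.rank = L) :
    ∃ P : Matrix (Fin M) (Fin M) (ZMod 2), IsUnit P ∧ δ = P * δ₀ * P⁻¹ := by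
  have hRK : LinearMap.range δ.mulVecLin ≤ LinearMap.ker δ.mulVecLin := by
    rintro x ⟨y, rfl⟩
    have h : (δ * δ).mulVecLin y = 0 := by rw [hδ]; simp
    simpa [Matrix.mulVecLin_mul, LinearMap.mem_ker] using h
  obtain ⟨B, key⟩ := aux_basis M L H hM hH δ.mulVecLin hRK hrank
  exact aux_matrix M L H hM hH δ₀ hδ₀ δ B key

/-- The number of invertible matrices `U` with `δ = U δ₀ U⁻¹` is the same for every
boundary operator `δ` of rank `L` (it equals the order of the normalizer of `δ₀`),
where `δ₀` is the canonical boundary operator with blocks of sizes `H, L, L` and the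
identity in block position `(2,3)`. -/
theorem canonical_conjugation_count (M L H : ℕ) (hM : 2 * L ≤ M) (hH : H = M - 2 * L)
    (δ₀ : Matrix (Fin M) (Fin M) (ZMod 2))
    (hδ₀ : ∀ i j : Fin M, δ₀ i j =
      if H ≤ (i : ℕ) ∧ (i : ℕ) < H + L ∧ (j : ℕ) = (i : ℕ) + L then 1 else 0)
    (δ : Matrix (Fin M) (Fin M) (ZMod 2)) (hδ : δ * δ = 0) (hrank : δ.rank = L) :
    Nat.card {U : Matrix (Fin M) (Fin M) (ZMod 2) // IsUnit U ∧ δ = U * δ₀ * U⁻¹} =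
      Nat.card {U : Matrix (Fin M) (Fin M) (ZMod 2) // IsUnit U ∧ δ₀ = U * δ₀ * U⁻¹} := by
  obtain ⟨V, hV, hVconj⟩ := exists_conj_canonical M L H hM hH δ₀ hδ₀ δ hδ hrank
  have hVdet : IsUnit V.det := (Matrix.isUnit_iff_isUnit_det V).mp hV
  have hVV : V * V⁻¹ = 1 := Matrix.mul_nonsing_inv V hVdet
  have hVV' : V⁻¹ * V = 1 := Matrix.nonsing_inv_mul V hVdet
  have hVinv : IsUnit V⁻¹ := Matrix.isUnit_nonsing_inv_iff.mpr hV
  apply Nat.card_congr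
  refine ⟨fun U => ⟨V⁻¹ * U.1, hVinv.mul U.2.1, ?_⟩,
          fun W => ⟨V * W.1, hV.mul W.2.1, ?_⟩, ?_, ?_⟩
  · obtain ⟨U, hU, hUc⟩ := U
    rw [Matrix.mul_inv_rev, Matrix.nonsing_inv_nonsing_inv V hVdet]
    have h1 : V * δ₀ * V⁻¹ = U * δ₀ * U⁻¹ := by rw [← hVconj, hUc]
    calc δ₀ = (V⁻¹ * V) * δ₀ * (V⁻¹ * V) := by rw [hVV', one_mul, mul_one]
    _ = V⁻¹ * (V * δ₀ * V⁻¹) * V := by noncomm_ring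
    _ = V⁻¹ * (U * δ₀ * U⁻¹) * V := by rw [h1]
    _ = V⁻¹ * U * δ₀ * (U⁻¹ * V) := by noncomm_ring
  · obtain ⟨U, hU, hUc⟩ := W
    rw [Matrix.mul_inv_rev]
    calc δ = V * δ₀ * V⁻¹ := hVconj
    _ = V * (U * δ₀ * U⁻¹) * V⁻¹ := by rw [← hUc]
    _ = V * U * δ₀ * (U⁻¹ * V⁻¹) := by noncomm_ring
  · intro U
    apply Subtype.ext
    show V * (V⁻¹ * U.1) = U.1
    rw [← mul_assoc, hVV, one_mul]
  · intro W
    apply Subtype.ext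
    show V⁻¹ * (V * W.1) = W.1
    rw [← mul_assoc, hVV', one_mul]
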